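/- Suppose ℕ⁺ is partitioned into finitely many infinite sets U₁,...,U_N such that for each pair p ≠ q, between U_p and U_q either there is an infinite matching of edges of colour r+1 (in a given colouring of the complete symmetric digraph), or some finite vertex set meets all [U_p,U_q]-edges of colour r+1. If additionally every directed path of colour r+1 has upper density at most 1/N and each Uᵢ has upper density exactly 1/N and spans a complete symmetric digraph of colour r+1, then the auxiliary digraph on {U₁,...,U_N} — with an edge (U_p,U_q) when, after removing finitely many vertices, every remaining [U_p,U_q]-edge has colour in {1,...,r} — has the property that its complement in K⃗_N contains no directed cycle. -/

import Mathlib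

open scoped Classical

/-- Upper density of a set of positive integers. -/
noncomputable def upperDensity (A : Set ℕ) : ℝ :=
  Filter.limsup
    (fun n : ℕ => (((Finset.Icc 1 n).filter (fun m => m ∈ A)).card : ℝ) / n)
    Filter.atTop

/-- A digraph (given by its edge relation `R`) contains a directed cycle. -/
def HasCycle {V : Type*} (R : V → V → Prop) : Prop :=
  ∃ (m : ℕ) (v : Fin (m + 1) → V), Function.Injective v ∧
    (∀ i : Fin m, R (v i.castSucc) (v i.succ)) ∧ R (v (Fin.last m)) (v 0)


namespace Stmt16Aux

open Fin.NatCast Fin.CommRing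

noncomputable def pick (a b : ℕ → ℕ) (l : List ℕ) : ℕ := sInf {j | a j ∉ l ∧ b j ∉ l}

lemma pick_spec {a b : ℕ → ℕ} (ha : Function.Injective a) (hb : Function.Injective b)
    (l : List ℕ) : a (pick a b l) ∉ l ∧ b (pick a b l) ∉ l := by
  have hfin : ({j | a j ∈ l} ∪ {j | b j ∈ l}).Finite :=
    (l.finite_toSet.preimage ha.injOn).union (l.finite_toSet.preimage hb.injOn)
  obtain ⟨j, hj⟩ := hfin.infinite_compl.nonempty
  have h : pick a b l ∈ {j | a j ∉ l ∧ b j ∉ l} :=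
    Nat.sInf_mem ⟨j, by simpa [not_or] using hj⟩
  exact h

variable {t : ℕ} [NeZero t] (W : Fin t → Set ℕ) (E : ℕ → ℕ → Prop) (a b : Fin t → ℕ → ℕ)

noncomputable def step (i : Fin t) (k : ℕ) (l : List ℕ) : List ℕ :=
  let l₁ := l ++ ((Finset.range (k+1)).filter fun x => x ∈ W i ∧ x ∉ l).toList
  l₁ ++ [a i (pick (a i) (b i) l₁), b i (pick (a i) (b i) l₁)]

noncomputable def LL : ℕ → List ℕ
  | 0 => [a 0 0]
  | (s+1) => step W a b ((s : Fin t)) (s / t) (LL s)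

variable (hE : ∀ i, ∀ x ∈ W i, ∀ y ∈ W i, x ≠ y → E x y)
  (ha : ∀ i, Function.Injective (a i)) (hb : ∀ i, Function.Injective (b i))
  (hmem : ∀ i j, a i j ∈ W i ∧ b i j ∈ W (i+1) ∧ E (a i j) (b i j))
  (hdisj : ∀ (i : Fin t) x, x ∈ W i → x ∉ W (i+1))

include hE ha hb hmem hdisj in
lemma step_inv (i : Fin t) (k : ℕ) (l : List ℕ) (hnd : l.Nodup) (hch : l.Chain' E)
    (hlast : ∀ x ∈ l.getLast?, x ∈ W i) :
    (step W a b i k l).Nodup ∧ (step W a b i k l).Chain' E ∧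
    (∀ x ∈ (step W a b i k l).getLast?, x ∈ W (i+1)) ∧
    l <+: step W a b i k l ∧
    (∀ x ∈ W i, x ≤ k → x ∈ step W a b i k l) ∧
    l.length + 2 ≤ (step W a b i k l).length := by
  set bl := ((Finset.range (k+1)).filter fun x => x ∈ W i ∧ x ∉ l).toList with hbl
  have hblmem : ∀ x ∈ bl, x ∈ W i ∧ x ∉ l := by
    intro x hx
    have := (Finset.mem_filter.1 (Finset.mem_toList.1 hx)).2
    exact this
  set l₁ := l ++ bl with hl₁
  set j := pick (a i) (b i) l₁ with hj
  have hps := pick_spec (ha i) (hb i) l₁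
  have hstep : step W a b i k l = l₁ ++ [a i j, b i j] := rfl
  have hai : a i j ∈ W i := (hmem i j).1
  have hbi : b i j ∈ W (i+1) := (hmem i j).2.1
  have hab : a i j ≠ b i j := fun h => hdisj i _ hai (h ▸ hbi)
  have hnd₁ : l₁.Nodup := by
    refine hnd.append (Finset.nodup_toList _) ?_
    intro x hx hx'
    exact (hblmem x hx').2 hx
  have hlast₁ : ∀ x ∈ l₁.getLast?, x ∈ W i := by
    intro x hx
    rw [hl₁, List.getLast?_append] at hx
    cases h : bl.getLast? with
    | none => rw [h] at hx; exact hlast x (by simpa using hx)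
    | some y =>
      rw [h] at hx; simp only [Option.some_or, Option.or_some, Option.mem_def, Option.some.injEq] at hx
      subst hx
      exact (hblmem _ (List.mem_of_mem_getLast? h)).1
  have hch₁ : l₁.Chain' E := by
    unfold List.Chain'; rw [hl₁, List.isChain_append]
    refine ⟨hch, ?_, ?_⟩
    · refine List.Pairwise.isChain ?_
      refine (Finset.nodup_toList _).imp_of_mem ?_
      intro x y hx hy hxy
      exact hE i x (hblmem x hx).1 y (hblmem y hy).1 hxy
    · intro x hx y hy
      have hyb := hblmem y (List.mem_of_mem_head? hy)
      refine hE i x (hlast x hx) y hyb.1 ?_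
      rintro rfl; exact hyb.2 (List.mem_of_mem_getLast? hx)
  rw [hstep]
  constructor
  · -- Nodup
    refine hnd₁.append ?_ ?_
    · simp [hab]
    · intro x hx
      simp only [List.mem_cons, List.not_mem_nil, or_false, List.mem_singleton]
      rintro (rfl | rfl)
      exacts [hps.1 hx, hps.2 hx]
  refine ⟨?_, ?_, ?_, ?_, ?_⟩
  · -- Chain'
    unfold List.Chain'; rw [List.isChain_append]
    refine ⟨hch₁, ?_, ?_⟩
    · simp only [List.isChain_cons_cons, List.isChain_singleton, and_true]
      exact (hmem i j).2.2
    · intro x hx y hy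
      simp only [List.head?_cons, Option.mem_def, Option.some.injEq] at hy
      subst hy
      refine hE i x (hlast₁ x hx) _ hai ?_
      rintro rfl; exact hps.1 (List.mem_of_mem_getLast? hx)
  · -- last
    intro x hx
    rw [List.getLast?_append] at hx
    simp only [List.getLast?_cons_cons, List.getLast?_singleton, Option.some_or, Option.or_some,
      Option.mem_def, Option.some.injEq] at hx
    subst hx; exact hbi
  · exact ⟨bl ++ [a i j, b i j], by simp [hl₁]⟩
  · intro x hxW hxk
    by_cases hxl : x ∈ l
    · exact List.mem_append.2 (Or.inl (List.mem_append.2 (Or.inl hxl)))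
    · refine List.mem_append.2 (Or.inl (List.mem_append.2 (Or.inr ?_)))
      rw [Finset.mem_toList, Finset.mem_filter, Finset.mem_range]
      exact ⟨Nat.lt_succ_of_le hxk, hxW, hxl⟩
  · rw [hl₁]
    simp only [List.length_append, List.length_cons, List.length_nil]
    omega

lemma step_prefix (i : Fin t) (k : ℕ) (l : List ℕ) : l <+: step W a b i k l :=
  (l.prefix_append _).trans ((l ++ _).prefix_append _)

lemma step_length (i : Fin t) (k : ℕ) (l : List ℕ) :
    l.length + 2 ≤ (step W a b i k l).length := by
  show l.length + 2 ≤ ((l ++ _) ++ [_, _]).length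
  simp only [List.length_append, List.length_cons, List.length_nil]
  omega

lemma LL_prefix : ∀ {s s' : ℕ}, s ≤ s' → LL W a b s <+: LL W a b s' := by
  intro s s' h
  induction s' with
  | zero => simpa [Nat.le_zero.1 h] using List.prefix_refl _
  | succ s' ih =>
    rcases Nat.lt_or_ge s (s'+1) with h' | h'
    · exact (ih (Nat.lt_succ_iff.1 h')).trans (step_prefix W a b _ _ _)
    · have : s = s' + 1 := le_antisymm h h'
      subst this; exact List.prefix_refl _

lemma LL_len : ∀ s : ℕ, s < (LL W a b s).length := by
  intro s
  induction s with
  | zero => simp [LL]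
  | succ s ih =>
    have h2 : (LL W a b s).length + 2 ≤ (LL W a b (s+1)).length :=
      step_length W a b ((s : Fin t)) (s / t) (LL W a b s)
    omega

include hE ha hb hmem hdisj in
lemma LL_inv : ∀ s : ℕ, (LL W a b s).Nodup ∧ (LL W a b s).Chain' E ∧
    (∀ x ∈ (LL W a b s).getLast?, x ∈ W (s : Fin t)) := by
  intro s
  induction s with
  | zero =>
    refine ⟨by simp [LL], by simp [LL, List.Chain', List.isChain_singleton], ?_⟩
    intro x hx
    simp only [LL, List.getLast?_singleton, Option.mem_def, Option.some.injEq] at hx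
    subst hx
    simpa using (hmem 0 0).1
  | succ s ih =>
    obtain ⟨h1, h2, h3⟩ := ih
    have hs := step_inv W E a b hE ha hb hmem hdisj ((s : Fin t)) (s / t) _ h1 h2 h3
    have hc : ((s + 1 : ℕ) : Fin t) = (s : Fin t) + 1 := by push_cast; ring
    exact ⟨hs.1, hs.2.1, by rw [hc]; exact hs.2.2.1⟩

include hE ha hb hmem hdisj in
lemma LL_cover (i : Fin t) (x : ℕ) (hx : x ∈ W i) :
    x ∈ LL W a b (x * t + i.val + 1) := by
  have ht : 0 < t := Nat.pos_of_ne_zero (NeZero.ne t)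
  set s := x * t + i.val with hs
  have hmod : ((s : ℕ) : Fin t) = i := by
    apply Fin.ext
    rw [Fin.val_natCast, hs, Nat.mul_comm, Nat.mul_add_mod]
    exact Nat.mod_eq_of_lt i.isLt
  have hdiv : s / t = x := by
    rw [hs, Nat.mul_comm, Nat.mul_add_div ht, Nat.div_eq_of_lt i.isLt, Nat.add_zero]
  obtain ⟨h1, h2, h3⟩ := LL_inv W E a b hE ha hb hmem hdisj s
  have hst := step_inv W E a b hE ha hb hmem hdisj ((s : Fin t)) (s / t) _ h1 h2 h3
  have := hst.2.2.2.2.1 x (by rw [hmod]; exact hx) (by rw [hdiv])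
  exact this

noncomputable def vv (n : ℕ) : ℕ := (LL W a b (n + 1)).getD n 0

lemma vv_eq {n K : ℕ} (h : n < (LL W a b K).length) : vv W a b n = (LL W a b K)[n] := by
  have h1 : n < (LL W a b (n + 1)).length := lt_of_lt_of_le (Nat.lt_succ_self n) (LL_len W a b (n+1)).le
  rw [vv, List.getD_eq_getElem _ _ h1]
  rcases le_total (n + 1) K with h' | h'
  · exact (LL_prefix W a b h').getElem h1
  · exact ((LL_prefix W a b h').getElem h).symm

include hE ha hb hmem hdisj in
theorem exists_path : ∃ v : ℕ → ℕ, Function.Injective v ∧ (∀ n, E (v n) (v (n + 1))) ∧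
    ∀ i, W i ⊆ Set.range v := by
  refine ⟨vv W a b, ?_, ?_, ?_⟩
  · intro n m hnm
    by_contra hne
    set K := n + m + 2 with hK
    have hKl := LL_len W a b K
    have hn : n < (LL W a b K).length := by omega
    have hm : m < (LL W a b K).length := by omega
    rw [vv_eq W a b hn, vv_eq W a b hm] at hnm
    have hnd := (LL_inv W E a b hE ha hb hmem hdisj K).1
    exact hne (by simpa using (List.Nodup.getElem_inj_iff hnd).1 hnm)
  · intro n
    have hch := (LL_inv W E a b hE ha hb hmem hdisj (n + 3)).2.1
    have hlen := LL_len W a b (n + 3)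
    unfold List.Chain' at hch; rw [List.isChain_iff_getElem] at hch
    have h1 : n < (LL W a b (n+3)).length := by omega
    have h2 : n + 1 < (LL W a b (n+3)).length := by omega
    have := hch n (by omega)
    rw [vv_eq W a b h1, vv_eq W a b h2]
    simpa [List.get_eq_getElem] using this
  · intro i x hx
    have hmem' := LL_cover W E a b hE ha hb hmem hdisj i x hx
    obtain ⟨j, hj, hjx⟩ := List.mem_iff_getElem.1 hmem'
    exact ⟨j, by rw [vv_eq W a b hj]; exact hjx⟩

end Stmt16Aux

/-- Suppose the positive integers are partitioned into infinite sets
`U 1, …, U N` such that for each pair `p ≠ q` there is either an infinite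
matching of `[U p, U q]`-edges of colour `r + 1` or a finite vertex set meeting
all such edges; suppose moreover that every directed path of colour `r + 1` has
upper density at most `1 / N`, and each `U p` has upper density exactly `1 / N`
and spans a complete symmetric digraph of colour `r + 1`. Then the complement
(within `K⃗_N`) of the auxiliary digraph — which has an edge `(U p, U q)` when
after deleting finitely many vertices every remaining `[U p, U q]`-edge has a
colour in `{1, …, r}` — contains no directed cycle. -/
theorem stmt16 (r N : ℕ) (hN : 0 < N) (c : ℕ → ℕ → Fin (r + 1))
    (U : Fin N → Set ℕ)
    (hpart : ∀ n : ℕ, ∃! p : Fin N, n ∈ U p)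
    (hinf : ∀ p, (U p).Infinite)
    (hmatch : ∀ p q : Fin N, p ≠ q →
      (∃ a b : ℕ → ℕ, Function.Injective a ∧ Function.Injective b ∧
        ∀ i : ℕ, a i ∈ U p ∧ b i ∈ U q ∧ c (a i) (b i) = Fin.last r) ∨
      (∃ F : Finset ℕ, ∀ x ∈ U p, ∀ y ∈ U q,
        c x y = Fin.last r → x ∈ F ∨ y ∈ F))
    (hdens : ∀ v : ℕ → ℕ, Function.Injective v →
      (∀ i : ℕ, c (v i) (v (i + 1)) = Fin.last r) →
      upperDensity (Set.range v) ≤ 1 / N)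
    (hUdens : ∀ p, upperDensity (U p) = 1 / N)
    (hclique : ∀ p, ∀ x ∈ U p, ∀ y ∈ U p, x ≠ y → c x y = Fin.last r) :
    ¬HasCycle (fun p q : Fin N =>
      p ≠ q ∧ ¬∃ F : Finset ℕ, ∀ x ∈ U p, ∀ y ∈ U q,
        x ∉ F → y ∉ F → c x y ≠ Fin.last r) := by
  rintro ⟨m, vtx, hinj, hedge, hlastE⟩
  rcases Nat.eq_zero_or_pos m with rfl | hm
  · exact hlastE.1 rfl
  -- the cyclic edge property
  have hR : ∀ i : Fin (m + 1), vtx i ≠ vtx (i + 1) ∧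
      ¬∃ F : Finset ℕ, ∀ x ∈ U (vtx i), ∀ y ∈ U (vtx (i + 1)),
        x ∉ F → y ∉ F → c x y ≠ Fin.last r := by
    intro i
    by_cases h : i = Fin.last m
    · subst h; rw [Fin.last_add_one]; exact hlastE
    · have hlt : i.val < m :=
        lt_of_le_of_ne (Nat.lt_succ_iff.1 i.isLt) (fun he => h (Fin.ext he))
      have h1 : i + 1 = (⟨i.val, hlt⟩ : Fin m).succ := by
        apply Fin.ext
        rw [Fin.val_add_one]
        simp [h]
      have h0 : i = (⟨i.val, hlt⟩ : Fin m).castSucc := Fin.ext rfl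
      have he := hedge ⟨i.val, hlt⟩
      rw [← h0, ← h1] at he
      exact he
  -- matchings along the cycle
  have hM : ∀ i : Fin (m + 1), ∃ a b : ℕ → ℕ, Function.Injective a ∧
      Function.Injective b ∧ ∀ j : ℕ, a j ∈ U (vtx i) ∧ b j ∈ U (vtx (i + 1)) ∧
        c (a j) (b j) = Fin.last r := by
    intro i
    rcases hmatch (vtx i) (vtx (i + 1)) (hR i).1 with h | ⟨F, hF⟩
    · exact h
    · exact absurd ⟨F, fun x hx y hy hxF hyF hc => by
        rcases hF x hx y hy hc with h' | h' <;> [exact hxF h'; exact hyF h']⟩ (hR i).2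
  choose A B hA hB hAB using hM
  -- build the infinite monochromatic path
  have hUdisj : ∀ p q : Fin N, p ≠ q → ∀ x, x ∈ U p → x ∉ U q := by
    intro p q hpq x hxp hxq
    obtain ⟨p', -, hp'⟩ := hpart x
    exact hpq ((hp' p hxp).trans (hp' q hxq).symm)
  obtain ⟨v, hvinj, hvE, hvcov⟩ :=
    Stmt16Aux.exists_path (t := m + 1) (fun i => U (vtx i))
      (fun x y => c x y = Fin.last r) A B
      (fun i x hx y hy hxy => hclique (vtx i) x hx y hy hxy)
      hA hB hAB
      (fun i x hx => hUdisj (vtx i) (vtx (i + 1)) (hR i).1 x hx)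
  -- density computation
  have hDle := hdens v hvinj hvE
  set p0 := vtx 0 with hp0
  set p1 := vtx (0 + 1) with hp1
  have hp01 : p0 ≠ p1 := (hR 0).1
  have hsub0 : U p0 ⊆ Set.range v := hvcov 0
  have hsub1 : U p1 ⊆ Set.range v := hvcov (0 + 1)
  have hN2 : 2 ≤ N := by
    have := Finset.card_le_univ ({p0, p1} : Finset (Fin N))
    rwa [Finset.card_pair hp01, Fintype.card_fin] at this
  have hNpos : (0 : ℝ) < N := by exact_mod_cast hN
  set g : Fin N → ℕ → ℝ :=
    fun p n => (((Finset.Icc 1 n).filter (fun m => m ∈ U p)).card : ℝ) / n with hg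
  have hUd : ∀ p, Filter.limsup (g p) Filter.atTop = 1 / N := fun p => hUdens p
  have hg0 : ∀ p n, 0 ≤ g p n := by intro p n; rw [hg]; positivity
  have hg1 : ∀ p n, g p n ≤ 1 := by
    intro p n
    rcases Nat.eq_zero_or_pos n with rfl | hn
    · simp [hg]
    · rw [hg, div_le_one (by exact_mod_cast hn)]
      have h1 : ((Finset.Icc 1 n).filter (fun m => m ∈ U p)).card ≤ (Finset.Icc 1 n).card :=
        Finset.card_filter_le _ _
      have h2 : (Finset.Icc 1 n).card = n := by rw [Nat.card_Icc]; omega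
      exact_mod_cast h2 ▸ h1
  have hbdd : ∀ p, Filter.IsBoundedUnder (· ≤ ·) Filter.atTop (g p) :=
    fun p => Filter.isBoundedUnder_of ⟨1, fun n => hg1 p n⟩
  -- sum of counts over the partition
  have hcount : ∀ n : ℕ, ∑ p : Fin N, ((Finset.Icc 1 n).filter (fun m => m ∈ U p)).card = n := by
    intro n
    have h1 : ∀ p : Fin N, ((Finset.Icc 1 n).filter (fun m => m ∈ U p)).card
        = ∑ m ∈ Finset.Icc 1 n, if m ∈ U p then 1 else 0 :=
      fun p => Finset.card_filter _ _
    rw [Finset.sum_congr rfl (fun p _ => h1 p), Finset.sum_comm]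
    have h2 : ∀ m : ℕ, ∑ p : Fin N, (if m ∈ U p then 1 else 0) = 1 := by
      intro m
      obtain ⟨p, hp, hu⟩ := hpart m
      rw [Finset.sum_eq_single p]
      · simp [hp]
      · intro q _ hq
        simp only [ite_eq_right_iff]
        intro hmq
        exact absurd (hu q hmq) hq
      · intro h; exact absurd (Finset.mem_univ p) h
    rw [Finset.sum_congr rfl (fun m _ => h2 m)]
    rw [Finset.sum_const, Nat.card_Icc, smul_eq_mul, mul_one]
    omega
  have hsumg : ∀ n : ℕ, 1 ≤ n → ∑ p : Fin N, g p n = 1 := by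
    intro n hn
    have hn' : (0 : ℝ) < n := by exact_mod_cast hn
    rw [hg, ← Finset.sum_div]
    rw [show (∑ p : Fin N, (((Finset.Icc 1 n).filter (fun m => m ∈ U p)).card : ℝ)) = (n : ℝ) by
      exact_mod_cast congrArg (Nat.cast (R := ℝ)) (hcount n)]
    field_simp
  -- eventual upper bounds
  have hev : ∀ q : Fin N, ∀ ε : ℝ, 0 < ε → ∀ᶠ n in Filter.atTop, g q n < 1 / N + ε := by
    intro q ε hε
    refine Filter.eventually_lt_of_limsup_lt ?_ (hbdd q)
    rw [hUd q]; linarith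
  -- main density lower bound
  have hmain : ∀ δ : ℝ, 0 < δ → 2 / N - δ ≤ upperDensity (Set.range v) := by
    intro δ hδ
    set ε : ℝ := δ / N with hε
    have hεpos : 0 < ε := by positivity
    set s : Finset (Fin N) := Finset.univ \ {p0, p1} with hs
    have hcard : (s.card : ℝ) = (N : ℝ) - 2 := by
      rw [hs, Finset.card_sdiff_of_subset (Finset.subset_univ _), Finset.card_pair hp01,
        Finset.card_univ, Fintype.card_fin]
      push_cast [Nat.cast_sub hN2]
      ring
    have hevs : ∀ᶠ n in Filter.atTop, ∀ q ∈ s, g q n < 1 / N + ε :=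
      (Filter.eventually_all_finset s).2 (fun q _ => hev q ε hεpos)
    have hev1 : ∀ᶠ n in Filter.atTop, 1 ≤ n := Filter.eventually_ge_atTop 1
    have hev2 : ∀ᶠ n in Filter.atTop,
        2 / N - δ ≤ (((Finset.Icc 1 n).filter (fun m => m ∈ Set.range v)).card : ℝ) / n := by
      filter_upwards [hevs, hev1] with n hns hn1
      have hsplit : g p0 n + g p1 n = 1 - ∑ q ∈ s, g q n := by
        have h3 : ∑ q ∈ s, g q n + ∑ q ∈ ({p0, p1} : Finset (Fin N)), g q n
            = ∑ q : Fin N, g q n := Finset.sum_sdiff (Finset.subset_univ _)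
        rw [Finset.sum_pair hp01] at h3
        rw [hsumg n hn1] at h3
        linarith
      have hsbound : ∑ q ∈ s, g q n ≤ (s.card : ℝ) * (1 / N + ε) := by
        have h := Finset.sum_le_card_nsmul s (fun q => g q n) (1 / N + ε)
          (fun q hq => (hns q hq).le)
        rwa [nsmul_eq_mul] at h
      have hlow : 2 / N - δ ≤ g p0 n + g p1 n := by
        rw [hsplit]
        have hNε : (s.card : ℝ) * (1 / N + ε) = ((N : ℝ) - 2) * (1 / N + ε) := by
          rw [hcard]
        have hεδ : ((N : ℝ) - 2) * ε ≤ δ := by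
          rw [hε]
          rw [div_eq_mul_inv]
          have h4 : ((N : ℝ) - 2) * (δ * (N : ℝ)⁻¹) = δ * (((N : ℝ) - 2) / N) := by
            field_simp
          rw [h4]
          nlinarith [div_le_one_of_le₀ (by linarith : (N : ℝ) - 2 ≤ N) hNpos.le]
        have hexp : ((N : ℝ) - 2) * (1 / N) = 1 - 2 / N := by
          field_simp
        nlinarith [hsbound, hNε]
      -- counts: U p0 and U p1 both inside range v, disjoint
      have hcnt : g p0 n + g p1 n
          ≤ (((Finset.Icc 1 n).filter (fun m => m ∈ Set.range v)).card : ℝ) / n := by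
        have hn' : (0 : ℝ) < n := by exact_mod_cast hn1
        rw [hg, ← add_div, div_le_div_iff_of_pos_right hn']
        have hdisj01 : Disjoint ((Finset.Icc 1 n).filter (fun m => m ∈ U p0))
            ((Finset.Icc 1 n).filter (fun m => m ∈ U p1)) := by
          rw [Finset.disjoint_filter]
          intro x _ hx0
          exact hUdisj p0 p1 hp01 x hx0
        have hunion : ((Finset.Icc 1 n).filter (fun m => m ∈ U p0))
            ∪ ((Finset.Icc 1 n).filter (fun m => m ∈ U p1))
            ⊆ (Finset.Icc 1 n).filter (fun m => m ∈ Set.range v) := by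
          intro x hx
          rcases Finset.mem_union.1 hx with h' | h' <;>
            rw [Finset.mem_filter] at h' ⊢
          · exact ⟨h'.1, hsub0 h'.2⟩
          · exact ⟨h'.1, hsub1 h'.2⟩
        have := Finset.card_le_card hunion
        rw [Finset.card_union_of_disjoint hdisj01] at this
        exact_mod_cast this
      linarith
    refine Filter.le_limsup_of_frequently_le hev2.frequently ?_
    refine Filter.isBoundedUnder_of ⟨1, fun n => ?_⟩
    rcases Nat.eq_zero_or_pos n with rfl | hn
    · simp
    · rw [div_le_one (by exact_mod_cast hn)]
      have h1 := Finset.card_filter_le (Finset.Icc 1 n) (fun m => m ∈ Set.range v)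
      have h2 : (Finset.Icc 1 n).card = n := by rw [Nat.card_Icc]; omega
      exact_mod_cast h2 ▸ h1
  -- conclude
  have h2N : (2 : ℝ) / N ≤ 1 / N := by
    have h5 : ∀ δ : ℝ, 0 < δ → 2 / N ≤ 1 / N + δ := by
      intro δ hδ
      have := (hmain δ hδ).trans hDle
      linarith
    exact le_of_forall_pos_le_add h5
  have h6 : (0 : ℝ) < 1 / N := by positivity
  have h7 : (2 : ℝ) / N = 1 / N + 1 / N := by ring
  linarith
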